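/- If G is a path-forest of order n with t ≥ 1 components, then b(G) ≤ ⌈√n⌉ + t − 1. -/

import Mathlib

/-- The set of burned vertices after `t` rounds, given fire sources `x`. -/
def burnedSet {V : Type*} (G : SimpleGraph V) {k : ℕ} (x : Fin k → V) : ℕ → Set V
  | 0 => ∅
  | t + 1 =>
      burnedSet G x t ∪ {v | ∃ u ∈ burnedSet G x t, G.Adj u v} ∪
        {v | ∃ h : t < k, v = x ⟨t, h⟩}

/-- `x` is a burning sequence: each source is unburned when chosen, and after
round `k` every vertex is burned. -/
def IsBurningSeq {V : Type*} (G : SimpleGraph V) {k : ℕ} (x : Fin k → V) : Prop :=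
  (∀ i : Fin k, x i ∉ burnedSet G x i) ∧ burnedSet G x k = Set.univ

/-- The burning number: the least length of a burning sequence. -/
noncomputable def burningNumber {V : Type*} (G : SimpleGraph V) : ℕ :=
  sInf {k | ∃ x : Fin k → V, IsBurningSeq G x}


def coverInterval (lo hi ρ : ℕ) : List ℕ :=
  if hi - lo ≤ 2*ρ then [max lo (hi - ρ)]
  else (hi - ρ) :: coverInterval lo (hi - (2*ρ+1)) (ρ+1)
termination_by hi - lo
decreasing_by omega

theorem coverInterval_ne_nil (lo hi ρ : ℕ) : coverInterval lo hi ρ ≠ [] := by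
  rw [coverInterval]; split <;> simp

theorem coverInterval_mem (lo hi ρ : ℕ) : lo ≤ hi →
    ∀ c ∈ coverInterval lo hi ρ, lo ≤ c ∧ c ≤ hi := by
  induction hi, ρ using coverInterval.induct lo with
  | case1 hi ρ hle =>
    intro h c hc
    rw [coverInterval, if_pos hle] at hc; simp at hc; omega
  | case2 hi ρ hle ih =>
    intro h c hc
    rw [coverInterval, if_neg hle] at hc
    rcases List.mem_cons.1 hc with rfl | hc
    · omega
    · have := ih (by omega) c hc; omega

theorem coverInterval_chain (lo hi ρ : ℕ) : lo ≤ hi →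
    (coverInterval lo hi ρ).Chain' (fun a b => b < a) := by
  induction hi, ρ using coverInterval.induct lo with
  | case1 hi ρ hle => intro h; rw [coverInterval, if_pos hle]; exact List.isChain_singleton _
  | case2 hi ρ hle ih =>
    intro h
    rw [coverInterval, if_neg hle]
    refine List.isChain_cons.2 ⟨?_, ih (by omega)⟩
    intro y hy
    have hmem := coverInterval_mem lo (hi - (2*ρ+1)) (ρ+1) (by omega) y
      (List.mem_of_mem_head? hy)
    omega

theorem coverInterval_cover (lo hi ρ : ℕ) : lo ≤ hi →
    ∀ p, lo ≤ p → p ≤ hi → ∃ i, ∃ h : i < (coverInterval lo hi ρ).length,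
      p ≤ (coverInterval lo hi ρ)[i] + (ρ + i) ∧ (coverInterval lo hi ρ)[i] ≤ p + (ρ + i) := by
  induction hi, ρ using coverInterval.induct lo with
  | case1 hi ρ hle =>
    intro h p hp1 hp2
    rw [coverInterval, if_pos hle]
    refine ⟨0, by simp, ?_, ?_⟩ <;> simp <;> omega
  | case2 hi ρ hle ih =>
    intro h p hp1 hp2
    rw [coverInterval, if_neg hle]
    by_cases hcase : p + 2*ρ ≥ hi
    · refine ⟨0, by simp, ?_, ?_⟩ <;> simp <;> omega
    · obtain ⟨i, hi', h1, h2⟩ := ih (by omega) p hp1 (by omega)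
      refine ⟨i + 1, by simpa using Nat.succ_lt_succ hi', ?_, ?_⟩ <;>
        simp only [List.getElem_cons_succ] <;> omega

theorem coverInterval_len (lo hi ρ : ℕ) : lo ≤ hi →
    ∃ u₀, (coverInterval lo hi ρ).length = u₀ + 1 ∧ (ρ + u₀)^2 ≤ ρ^2 + (hi - lo) := by
  induction hi using Nat.strong_induction_on generalizing ρ with
  | _ hi ih =>
    intro h
    rw [coverInterval]
    by_cases hle : hi - lo ≤ 2*ρ
    · rw [if_pos hle]; exact ⟨0, by simp, by simp⟩
    · rw [if_neg hle]
      obtain ⟨u₀, hl, hq⟩ := ih (hi - (2*ρ+1)) (by omega) (ρ+1) (by omega)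
      refine ⟨u₀ + 1, by simp [hl], ?_⟩
      have e1 : ρ + (u₀ + 1) = ρ + 1 + u₀ := by ring
      rw [e1]
      refine le_trans hq ?_
      have e2 : (ρ+1)^2 = ρ^2 + (2*ρ+1) := by ring
      omega

theorem chain'_lt_index {l : List ℕ} (hc : l.Chain' (fun a b => b < a)) :
    ∀ (d i : ℕ) (hij : i + d < l.length), l[i + d] + d ≤ l[i] := by
  intro d
  induction d with
  | zero => simp
  | succ d ihd =>
    intro i hij
    have h1 : l[i + d + 1] < l[i + d] := List.isChain_iff_getElem.1 hc (i+d) (by omega)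
    have h2 := ihd i (by omega)
    show l[i + d + 1] + (d + 1) ≤ l[i]
    omega

def coverBlocks : List ℕ → ℕ → List ℕ
  | [], _ => []
  | ℓ :: R, ρ =>
      let cs := coverInterval R.sum (R.sum + ℓ - 1) ρ
      cs ++ coverBlocks R (ρ + cs.length)

theorem coverBlocks_mem (R : List ℕ) (hR : ∀ ℓ ∈ R, 1 ≤ ℓ) :
    ∀ ρ, ∀ c ∈ coverBlocks R ρ, c < R.sum := by
  induction R with
  | nil => intro ρ c hc; simp [coverBlocks] at hc
  | cons ℓ R ih =>
    intro ρ c hc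
    have hℓ : 1 ≤ ℓ := hR ℓ (by simp)
    rw [coverBlocks] at hc
    rcases List.mem_append.1 hc with hc | hc
    · have := coverInterval_mem R.sum (R.sum + ℓ - 1) ρ (by omega) c hc
      simp only [List.sum_cons]; omega
    · have := ih (fun x hx => hR x (by simp [hx])) _ c hc
      simp only [List.sum_cons]; omega

theorem coverBlocks_chain (R : List ℕ) (hR : ∀ ℓ ∈ R, 1 ≤ ℓ) :
    ∀ ρ, (coverBlocks R ρ).Chain' (fun a b => b < a) := by
  induction R with
  | nil => intro ρ; exact List.isChain_nil
  | cons ℓ R ih =>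
    intro ρ
    have hℓ : 1 ≤ ℓ := hR ℓ (by simp)
    rw [coverBlocks]
    refine List.IsChain.append (coverInterval_chain _ _ _ (by omega))
      (ih (fun x hx => hR x (by simp [hx])) _) ?_
    intro x hx y hy
    have hx' := coverInterval_mem R.sum (R.sum + ℓ - 1) ρ (by omega) x
      (List.mem_of_mem_getLast? hx)
    have hy' := coverBlocks_mem R (fun x hx => hR x (by simp [hx])) _ y
      (List.mem_of_mem_head? hy)
    omega

theorem coverBlocks_cover (R : List ℕ) (hR : ∀ ℓ ∈ R, 1 ≤ ℓ) :
    ∀ ρ R₁ ℓ R₂, R = R₁ ++ ℓ :: R₂ →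
    ∀ p, R₂.sum ≤ p → p < R₂.sum + ℓ →
    ∃ i, ∃ h : i < (coverBlocks R ρ).length,
      (R₂.sum ≤ (coverBlocks R ρ)[i] ∧ (coverBlocks R ρ)[i] < R₂.sum + ℓ) ∧
      p ≤ (coverBlocks R ρ)[i] + (ρ + i) ∧ (coverBlocks R ρ)[i] ≤ p + (ρ + i) := by
  induction R with
  | nil => intro ρ R₁ ℓ R₂ he; exact absurd he (by simp)
  | cons ℓ' R ih =>
    intro ρ R₁ ℓ R₂ he p hp1 hp2
    have hℓ' : 1 ≤ ℓ' := hR ℓ' (by simp)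
    rcases R₁ with _ | ⟨ℓ'', R₁⟩
    · -- first block
      simp only [List.nil_append, List.cons.injEq] at he
      obtain ⟨rfl, rfl⟩ := he
      rw [coverBlocks]
      obtain ⟨i, hilt, h1, h2⟩ := coverInterval_cover R.sum (R.sum + ℓ' - 1) ρ (by omega)
        p hp1 (by omega)
      have hmem := coverInterval_mem R.sum (R.sum + ℓ' - 1) ρ (by omega) _
        (List.getElem_mem hilt)
      have hlen : i < (coverInterval R.sum (R.sum + ℓ' - 1) ρ ++
          coverBlocks R (ρ + (coverInterval R.sum (R.sum + ℓ' - 1) ρ).length)).length := by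
        rw [List.length_append]; omega
      refine ⟨i, hlen, ?_⟩
      rw [List.getElem_append_left hilt]
      exact ⟨⟨hmem.1, by omega⟩, h1, h2⟩
    · -- later block
      simp only [List.cons_append, List.cons.injEq] at he
      obtain ⟨rfl, he⟩ := he
      rw [coverBlocks]
      set cs := coverInterval R.sum (R.sum + ℓ' - 1) ρ with hcs
      obtain ⟨i, hilt, hblk, h1, h2⟩ := ih (fun x hx => hR x (by simp [hx]))
        (ρ + cs.length) R₁ ℓ R₂ he p hp1 hp2
      have hlen : cs.length + i < (cs ++ coverBlocks R (ρ + cs.length)).length := by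
        rw [List.length_append]; omega
      refine ⟨cs.length + i, hlen, ?_⟩
      have hEq : (cs ++ coverBlocks R (ρ + cs.length))[cs.length + i]'hlen
          = (coverBlocks R (ρ + cs.length))[i]'hilt := by
        rw [List.getElem_append_right (by omega)]
        congr 1
        omega
      rw [hEq]
      exact ⟨hblk, by omega, by omega⟩

theorem coverBlocks_len (R : List ℕ) (hR : ∀ ℓ ∈ R, 1 ≤ ℓ) :
    ∀ ρ, ∃ d, (coverBlocks R ρ).length = R.length + d ∧
      (ρ + d)^2 + R.length ≤ ρ^2 + R.sum := by
  induction R with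
  | nil => intro ρ; exact ⟨0, by simp [coverBlocks], by simp⟩
  | cons ℓ R ih =>
    intro ρ
    have hℓ : 1 ≤ ℓ := hR ℓ (by simp)
    rw [coverBlocks]
    set cs := coverInterval R.sum (R.sum + ℓ - 1) ρ with hcs
    obtain ⟨u₀, hu, hq⟩ := coverInterval_len R.sum (R.sum + ℓ - 1) ρ (by omega)
    obtain ⟨d', hd', hq'⟩ := ih (fun x hx => hR x (by simp [hx])) (ρ + cs.length)
    refine ⟨u₀ + d', ?_, ?_⟩
    · rw [List.length_append, hd', hu]; simp only [List.length_cons]; omega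
    · have hsub : R.sum + ℓ - 1 - R.sum = ℓ - 1 := by omega
      rw [hsub] at hq
      rw [hu] at hq'
      have e1 : ρ + (u₀ + 1) = ρ + u₀ + 1 := by ring
      have e2 : (ρ + u₀ + 1)^2 = (ρ+u₀)^2 + 2*(ρ+u₀) + 1 := by ring
      have e3 : (ρ + (u₀+1) + d')^2 = (ρ + (u₀ + d'))^2 + 2*(ρ + (u₀+d')) + 1 := by ring
      rw [e3, e1, e2] at hq'
      have e4 : (ρ + u₀)^2 ≤ ρ^2 + (ℓ - 1) := hq
      have e5 : ρ + (u₀ + d') ≥ ρ + u₀ := by omega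
      simp only [List.sum_cons, List.length_cons]
      -- goal : (ρ + (u₀+d'))^2 + (R.length + 1) ≤ ρ^2 + (ℓ + R.sum)
      omega



section BurnAPI
variable {V : Type*} {G : SimpleGraph V} {k : ℕ} {x : Fin k → V}

theorem burnedSet_mono_succ (s : ℕ) : burnedSet G x s ⊆ burnedSet G x (s+1) := by
  intro v hv; exact Or.inl (Or.inl hv)

theorem burnedSet_mono {s s' : ℕ} (h : s ≤ s') : burnedSet G x s ⊆ burnedSet G x s' := by
  induction s' with
  | zero => cases Nat.le_zero.1 h; exact le_refl _
  | succ s' ih =>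
    rcases Nat.lt_or_ge s (s'+1) with h' | h'
    · exact (ih (by omega)).trans (burnedSet_mono_succ s')
    · have : s = s' + 1 := by omega
      subst this; exact le_refl _

theorem mem_burnedSet_adj {u v : V} {s : ℕ} (hu : u ∈ burnedSet G x s) (h : G.Adj u v) :
    v ∈ burnedSet G x (s+1) :=
  Or.inl (Or.inr ⟨u, hu, h⟩)

theorem source_mem_burnedSet (i : ℕ) (h : i < k) : x ⟨i, h⟩ ∈ burnedSet G x (i+1) :=
  Or.inr ⟨h, rfl⟩

theorem burned_lower (f : V → ℕ)
    (hf : ∀ u v, G.Adj u v → f u + 1 = f v ∨ f v + 1 = f u) :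
    ∀ s v, v ∈ burnedSet G x s → ∃ j, ∃ hj : j < k, j < s ∧
      f v + (j+1) ≤ f (x ⟨j, hj⟩) + s ∧ f (x ⟨j, hj⟩) + (j+1) ≤ f v + s := by
  intro s
  induction s with
  | zero => intro v hv; exact absurd hv (by simp [burnedSet])
  | succ s ih =>
    intro v hv
    rcases hv with (hv | ⟨u, hu, hadj⟩) | ⟨h, rfl⟩
    · obtain ⟨j, hj, hjs, h1, h2⟩ := ih v hv
      exact ⟨j, hj, by omega, by omega, by omega⟩
    · obtain ⟨j, hj, hjs, h1, h2⟩ := ih u hu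
      rcases hf u v hadj with h' | h'
      · exact ⟨j, hj, by omega, by omega, by omega⟩
      · exact ⟨j, hj, by omega, by omega, by omega⟩
    · exact ⟨s, h, by omega, by omega, by omega⟩

end BurnAPI

section Abstract
variable {V : Type*} {G : SimpleGraph V} {k : ℕ} {x : Fin k → V}

theorem burn_ball (F : ℕ → V) (lo ℓ : ℕ)
    (hstep : ∀ q, lo ≤ q → q + 1 < lo + ℓ → G.Adj (F q) (F (q+1))) :
    ∀ r s c p, lo ≤ c → c < lo + ℓ → lo ≤ p → p < lo + ℓ →
      p ≤ c + r → c ≤ p + r → F c ∈ burnedSet G x s → F p ∈ burnedSet G x (s + r) := by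
  intro r
  induction r with
  | zero =>
    intro s c p h1 h2 h3 h4 h5 h6 hc
    have : p = c := by omega
    subst this; simpa using hc
  | succ r ih =>
    intro s c p h1 h2 h3 h4 h5 h6 hc
    by_cases hpc : p = c
    · subst hpc; exact burnedSet_mono (by omega) hc
    have hs : s + (r + 1) = (s + 1) + r := by omega
    rw [hs]
    rcases Nat.lt_or_ge c p with h | h
    · have hadj : G.Adj (F c) (F (c+1)) := hstep c h1 (by omega)
      exact ih (s+1) (c+1) p (by omega) (by omega) h3 h4 (by omega) (by omega)
        (mem_burnedSet_adj hc hadj)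
    · have hcp : p < c := by omega
      have hadj : G.Adj (F (c-1)) (F (c-1+1)) := hstep (c-1) (by omega) (by omega)
      have he : c - 1 + 1 = c := by omega
      rw [he] at hadj
      exact ih (s+1) (c-1) p (by omega) (by omega) h3 h4 (by omega) (by omega)
        (mem_burnedSet_adj hc hadj.symm)

end Abstract

theorem exists_burning_of_positions {V : Type*} {G : SimpleGraph V} (R : List ℕ)
    (F : ℕ → V) (pos : V → ℕ)
    (hR1 : ∀ ℓ ∈ R, 1 ≤ ℓ)
    (hFpos : ∀ v, F (pos v) = v)
    (hposF : ∀ p, p < R.sum → pos (F p) = p)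
    (hadjpos : ∀ u v, G.Adj u v → pos u + 1 = pos v ∨ pos v + 1 = pos u)
    (hconsec : ∀ R₁ ℓ R₂, R = R₁ ++ ℓ :: R₂ → ∀ q, R₂.sum ≤ q → q + 1 < R₂.sum + ℓ →
      G.Adj (F q) (F (q+1)))
    (hblocks : ∀ v : V, ∃ R₁ ℓ R₂, R = R₁ ++ ℓ :: R₂ ∧ R₂.sum ≤ pos v ∧ pos v < R₂.sum + ℓ) :
    ∃ x : Fin (coverBlocks R 0).length → V, IsBurningSeq G x := by
  classical
  set out := coverBlocks R 0 with hout
  set U := out.length with hU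
  have hmemi : ∀ (i : ℕ) (h : i < U), out[i] < R.sum := fun i h =>
    coverBlocks_mem R hR1 0 out[i] (List.getElem_mem h)
  have hchain : out.Chain' (fun a b => b < a) := coverBlocks_chain R hR1 0
  set X : Fin U → V := fun i => F (out.getD (U - 1 - (i : ℕ)) 0) with hX
  refine ⟨X, ?_, ?_⟩
  · -- unburned condition
    intro i hburn
    obtain ⟨j, hj, hji, h1, h2⟩ := burned_lower pos hadjpos i (X i) hburn
    set a := U - 1 - (i : ℕ) with ha
    set b := U - 1 - j with hb
    have hia : a < U := by have := i.isLt; omega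
    have hib : b < U := by omega
    have hda : out.getD a 0 = out[a]'hia := List.getD_eq_getElem out 0 hia
    have hdb : out.getD b 0 = out[b]'hib := List.getD_eq_getElem out 0 hib
    have h1' : pos (X i) + (j + 1) ≤ pos (X ⟨j, hj⟩) + (i : ℕ) := h1
    have h2' : pos (X ⟨j, hj⟩) + (j + 1) ≤ pos (X i) + (i : ℕ) := h2
    have hXa : pos (X i) = out[a]'hia := by
      rw [hX]; simp only; rw [hda, hposF _ (hmemi a hia)]
    have hXb : pos (X ⟨j, hj⟩) = out[b]'hib := by
      rw [hX]; simp only; rw [hdb, hposF _ (hmemi b hib)]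
    rw [hXa, hXb] at h1' h2'
    have hab : a + (b - a) = b := by have := i.isLt; omega
    have hdec := chain'_lt_index hchain (b - a) a (by omega)
    simp only [hab] at hdec
    omega
  · -- coverage
    rw [Set.eq_univ_iff_forall]
    intro v
    obtain ⟨R₁, ℓ, R₂, hdec, hp1, hp2⟩ := hblocks v
    obtain ⟨i, hilt, ⟨hbl1, hbl2⟩, h1, h2⟩ :=
      coverBlocks_cover R hR1 0 R₁ ℓ R₂ hdec (pos v) hp1 hp2
    simp only [← hout] at hilt hbl1 hbl2 h1 h2
    have hiU : i < U := hilt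
    have hU1 : 1 ≤ U := by omega
    set ib := U - 1 - i with hib
    have hibU : ib < U := by omega
    have hid : U - 1 - ib = i := by omega
    have hsrc : X ⟨ib, hibU⟩ ∈ burnedSet G X (ib + 1) := source_mem_burnedSet ib hibU
    have hXib : X ⟨ib, hibU⟩ = F (out[i]'hilt) := by
      rw [hX]; simp only; rw [hid, List.getD_eq_getElem out 0 hilt]
    rw [hXib] at hsrc
    have hball := burn_ball (x := X) F R₂.sum ℓ
      (fun q hq1 hq2 => hconsec R₁ ℓ R₂ hdec q hq1 hq2)
      i (ib + 1) (out[i]'hilt) (pos v) hbl1 hbl2 hp1 hp2 (by omega) (by omega) hsrc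
    have hfin : ib + 1 + i = U := by omega
    rw [hfin, hFpos v] at hball
    exact hball

section GraphStruct

variable {V : Type*} {G : SimpleGraph V}

theorem support_getElem_eq_getVert {a b : V} (p : G.Walk a b) :
    ∀ (i : ℕ) (h : i < p.support.length), p.support[i] = p.getVert i := by
  induction p with
  | nil =>
    intro i h
    simp only [SimpleGraph.Walk.support_nil, List.length_cons, List.length_nil] at h
    have hi : i = 0 := by omega
    subst hi
    simp [SimpleGraph.Walk.support_nil, SimpleGraph.Walk.getVert_zero]
  | cons hadj q ih =>
    intro i h
    rcases i with _ | i
    · simp [SimpleGraph.Walk.support_cons, SimpleGraph.Walk.getVert_zero]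
    · simp only [SimpleGraph.Walk.support_cons, List.getElem_cons_succ,
        SimpleGraph.Walk.getVert_cons_succ]
      exact ih i (by simpa [SimpleGraph.Walk.support_cons] using h)

theorem adj_consecutive [DecidableEq V] (hac : G.IsAcyclic) {u v : V} (huv : G.Adj u v) :
    ∀ {a b : V} (p : G.Walk a b), p.IsPath → u ∈ p.support → v ∈ p.support →
    ∃ i, i < p.length ∧ ((p.getVert i = u ∧ p.getVert (i+1) = v) ∨
      (p.getVert i = v ∧ p.getVert (i+1) = u)) := by
  -- first, a helper for the case u = start
  have key : ∀ {a b : V} (p : G.Walk a b), p.IsPath → ∀ {w : V}, G.Adj a w → w ∈ p.support →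
      0 < p.length ∧ p.getVert 1 = w := by
    intro a b p hp w haw hw
    cases p with
    | nil =>
      simp [SimpleGraph.Walk.support_nil] at hw
      exact absurd (hw ▸ haw) (G.irrefl)
    | cons h q =>
      rename_i c _
      rw [SimpleGraph.Walk.support_cons] at hw
      rcases List.mem_cons.1 hw with rfl | hwq
      · exact absurd haw G.irrefl
      constructor
      · simp [SimpleGraph.Walk.length_cons]
      · show (SimpleGraph.Walk.cons h q).getVert (0+1) = w
        rw [SimpleGraph.Walk.getVert_cons_succ, SimpleGraph.Walk.getVert_zero]
        by_contra hne
        -- w ∈ q.support, w ≠ c; build a cycle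
        have hqpath : q.IsPath := ((SimpleGraph.Walk.cons_isPath_iff h q).1 hp).1
        have hanotq : a ∉ q.support := ((SimpleGraph.Walk.cons_isPath_iff h q).1 hp).2
        set t := q.takeUntil w hwq with ht
        have htpath : t.IsPath := hqpath.takeUntil hwq
        have htsub := q.support_takeUntil_subset hwq
        have hwalk : (SimpleGraph.Walk.cons h t).IsPath := by
          rw [SimpleGraph.Walk.cons_isPath_iff]
          exact ⟨htpath, fun hcon => hanotq (htsub hcon)⟩
        have hcyc : (SimpleGraph.Walk.cons haw.symm (SimpleGraph.Walk.cons h t)).IsCycle := by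
          rw [SimpleGraph.Walk.cons_isCycle_iff]
          refine ⟨hwalk, ?_⟩
          rw [SimpleGraph.Walk.edges_cons]
          intro hmem
          rcases List.mem_cons.1 hmem with heq | hmem'
          · rw [Sym2.eq_iff] at heq
            rcases heq with ⟨h1, h2⟩ | ⟨h1, h2⟩
            · exact G.irrefl (h1 ▸ haw)
            · exact hne h1.symm
          · exact hanotq (htsub (SimpleGraph.Walk.snd_mem_support_of_mem_edges t hmem'))
        exact hac _ hcyc
  intro a b p hp hu hv
  induction p with
  | nil =>
    simp [SimpleGraph.Walk.support_nil] at hu hv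
    exact absurd (hu ▸ hv ▸ huv) G.irrefl
  | cons h q ih =>
    rename_i s c _
    rw [SimpleGraph.Walk.support_cons] at hu hv
    rcases List.mem_cons.1 hu with rfl | huq
    · -- u is the start
      obtain ⟨hlen, hv1⟩ := key (SimpleGraph.Walk.cons h q) hp huv
        (by rw [SimpleGraph.Walk.support_cons]; exact hv)
      exact ⟨0, hlen, Or.inl ⟨SimpleGraph.Walk.getVert_zero _, hv1⟩⟩
    rcases List.mem_cons.1 hv with rfl | hvq
    · -- v is the start
      obtain ⟨hlen, hu1⟩ := key (SimpleGraph.Walk.cons h q) hp huv.symm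
        (by rw [SimpleGraph.Walk.support_cons]; exact hu)
      exact ⟨0, hlen, Or.inr ⟨SimpleGraph.Walk.getVert_zero _, hu1⟩⟩
    · obtain ⟨i, hilen, hcase⟩ := ih ((SimpleGraph.Walk.cons_isPath_iff h q).1 hp).1 huq hvq
      refine ⟨i + 1, by simp [SimpleGraph.Walk.length_cons]; omega, ?_⟩
      rw [SimpleGraph.Walk.getVert_cons_succ, SimpleGraph.Walk.getVert_cons_succ]
      exact hcase

theorem interior_two_neighbors {a b v : V} (p : G.Walk a b) (hp : p.IsPath)
    (hv : v ∈ p.support) (hva : v ≠ a) (hvb : v ≠ b) :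
    ∃ u₁ u₂, u₁ ≠ u₂ ∧ G.Adj v u₁ ∧ G.Adj v u₂ ∧ u₁ ∈ p.support ∧ u₂ ∈ p.support := by
  induction p with
  | nil => simp [SimpleGraph.Walk.support_nil] at hv; exact absurd hv hva
  | cons h q ih =>
    rename_i s c _
    rw [SimpleGraph.Walk.support_cons] at hv
    have hqpath : q.IsPath := ((SimpleGraph.Walk.cons_isPath_iff h q).1 hp).1
    have hanotq : s ∉ q.support := ((SimpleGraph.Walk.cons_isPath_iff h q).1 hp).2
    rcases List.mem_cons.1 hv with rfl | hvq
    · exact absurd rfl hva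
    by_cases hvc : v = c
    · subst hvc
      have hq1 : 0 < q.length := by
        cases q with
        | nil => exact absurd rfl hvb
        | cons h' q' => simp
      have hadj2 : G.Adj v (q.getVert 1) := by
        have h2 := q.adj_getVert_succ (i := 0) hq1
        rwa [SimpleGraph.Walk.getVert_zero] at h2
      have hmem2 : q.getVert 1 ∈ q.support := by
        have h1 : 1 < q.support.length := by rw [SimpleGraph.Walk.length_support]; omega
        rw [← support_getElem_eq_getVert q 1 h1]
        exact List.getElem_mem h1
      refine ⟨s, q.getVert 1, ?_, h.symm, hadj2, by simp [SimpleGraph.Walk.support_cons], ?_⟩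
      · intro hcon
        exact hanotq (hcon ▸ hmem2)
      · simp [SimpleGraph.Walk.support_cons]
    · obtain ⟨u₁, u₂, hne, ha1, ha2, hm1, hm2⟩ := ih hqpath hvq (Ne.symm (fun hx => hvc hx.symm)) hvb
      exact ⟨u₁, u₂, hne, ha1, ha2, by simp [SimpleGraph.Walk.support_cons, hm1],
        by simp [SimpleGraph.Walk.support_cons, hm2]⟩

end GraphStruct

theorem exists_spanning_path {V : Type*} {G : SimpleGraph V} [Fintype V] [DecidableEq V]
    (hac : G.IsAcyclic) (hdeg : ∀ v : V, (G.neighborSet v).ncard ≤ 2)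
    (K : G.ConnectedComponent) :
    ∃ (a b : V) (p : G.Walk a b), p.IsPath ∧
      (∀ v, v ∈ p.support ↔ G.connectedComponentMk v = K) := by
  classical
  set S : Set ℕ := {n | ∃ (a b : V) (p : G.Walk a b), p.IsPath ∧
    G.connectedComponentMk a = K ∧ p.length = n} with hS
  have hbdd : BddAbove S := by
    refine ⟨Fintype.card V, fun n hn => ?_⟩
    obtain ⟨a, b, p, hp, _, hlen⟩ := hn
    have h1 := hp.support_nodup.length_le_card
    rw [SimpleGraph.Walk.length_support] at h1
    omega
  have hne : S.Nonempty := by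
    obtain ⟨a, ha⟩ := K.exists_rep
    exact ⟨0, a, a, SimpleGraph.Walk.nil, SimpleGraph.Walk.IsPath.nil, ha, rfl⟩
  obtain ⟨a, b, p, hp, hKa, hlen⟩ := Nat.sSup_mem hne hbdd
  have hmax : ∀ m ∈ S, m ≤ sSup S := fun m hm => le_csSup hbdd hm
  have hclosed : ∀ v ∈ p.support, ∀ w, G.Adj v w → w ∈ p.support := by
    intro v hv w hvw
    by_contra hwn
    by_cases hva : v = a
    · subst hva
      have hpath : (SimpleGraph.Walk.cons hvw.symm p).IsPath :=
        (SimpleGraph.Walk.cons_isPath_iff _ _).2 ⟨hp, hwn⟩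
      have hKw : G.connectedComponentMk w = K := by
        rw [← hKa]
        exact SimpleGraph.ConnectedComponent.connectedComponentMk_eq_of_adj hvw.symm
      have hmem : p.length + 1 ∈ S :=
        ⟨w, b, SimpleGraph.Walk.cons hvw.symm p, hpath, hKw, by simp⟩
      have := hmax _ hmem
      omega
    by_cases hvb : v = b
    · subst hvb
      have hwr : w ∉ p.reverse.support := by
        rw [SimpleGraph.Walk.support_reverse]
        simpa using hwn
      have hpath : (SimpleGraph.Walk.cons hvw.symm p.reverse).IsPath :=
        (SimpleGraph.Walk.cons_isPath_iff _ _).2 ⟨hp.reverse, hwr⟩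
      have hKb : G.connectedComponentMk v = K := by
        rw [← hKa]
        exact (SimpleGraph.ConnectedComponent.eq.2 ⟨p⟩).symm
      have hKw : G.connectedComponentMk w = K := by
        rw [← hKb]
        exact SimpleGraph.ConnectedComponent.connectedComponentMk_eq_of_adj hvw.symm
      have hmem : p.length + 1 ∈ S :=
        ⟨w, a, SimpleGraph.Walk.cons hvw.symm p.reverse, hpath, hKw, by
          simp [SimpleGraph.Walk.length_reverse]⟩
      have := hmax _ hmem
      omega
    · obtain ⟨u₁, u₂, hne₁₂, ha1, ha2, hm1, hm2⟩ := interior_two_neighbors p hp hv hva hvb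
      have hsub3 : ({u₁, u₂, w} : Set V) ⊆ G.neighborSet v := by
        intro y hy
        rcases hy with rfl | rfl | rfl
        · exact ha1
        · exact ha2
        · exact hvw
      have h3 : ({u₁, u₂, w} : Set V).ncard = 3 :=
        Set.ncard_eq_three.2 ⟨u₁, u₂, w, hne₁₂,
          fun h => hwn (h ▸ hm1), fun h => hwn (h ▸ hm2), rfl⟩
      have hle := Set.ncard_le_ncard hsub3 (G.neighborSet v).toFinite
      have := hdeg v
      omega
  have hreach : ∀ (s0 w : V) (q : G.Walk s0 w), s0 ∈ p.support → w ∈ p.support := by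
    intro s0 w q
    induction q with
    | nil => exact id
    | cons hadj q ih => intro hs; exact ih (hclosed _ hs _ hadj)
  refine ⟨a, b, p, hp, fun v => ⟨?_, ?_⟩⟩
  · intro hv
    rw [← hKa]
    exact (SimpleGraph.ConnectedComponent.eq.2 ⟨p.takeUntil v hv⟩).symm
  · intro hK
    have : G.Reachable a v := SimpleGraph.ConnectedComponent.eq.1 (hKa.trans hK.symm)
    obtain ⟨q⟩ := this
    exact hreach a v q p.start_mem_support

theorem flatten_getD {α : Type*} (d : α) :
    ∀ (Ls : List (List α)) (j : ℕ) (hj : j < Ls.length) (i : ℕ) (hi : i < (Ls[j]'hj).length),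
      Ls.flatten.getD (((Ls.map List.length).take j).sum + i) d = (Ls[j]'hj).getD i d := by
  intro Ls
  induction Ls with
  | nil => intro j hj; simp at hj
  | cons l Ls ih =>
    intro j hj i hi
    rcases j with _ | j
    · simp only [List.getElem_cons_zero] at hi ⊢
      rw [List.flatten_cons, List.map_cons, List.take_zero, List.sum_nil, Nat.zero_add,
        List.getD_append _ _ _ _ hi]
    · simp only [List.getElem_cons_succ] at hi ⊢
      rw [List.flatten_cons, List.map_cons, List.take_succ_cons, List.sum_cons]
      rw [List.getD_append_right _ _ _ _ (by omega)]
      rw [show l.length + ((Ls.map List.length).take j).sum + i - l.length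
        = ((Ls.map List.length).take j).sum + i from by omega]
      exact ih j (by simpa using hj) i hi

theorem chain'_getD {α : Type*} (d : α) {R : α → α → Prop} {l : List α} (hc : l.Chain' R)
    (i : ℕ) (h : i + 1 < l.length) : R (l.getD i d) (l.getD (i+1) d) := by
  rw [List.getD_eq_getElem l d (by omega : i < l.length), List.getD_eq_getElem l d h]
  have h2 := List.isChain_iff_getElem.1 hc i (by omega)
  simpa [List.get_eq_getElem] using h2

theorem reverse_decomp {α : Type*} (l : List α) (j : ℕ) (hj : j < l.length) :
    l.reverse = (l.drop (j+1)).reverse ++ l[j] :: (l.take j).reverse := by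
  conv_lhs => rw [← List.take_append_drop j l, List.drop_eq_getElem_cons hj]
  simp [List.reverse_append]

theorem burningNumber_le_main {V : Type*} [Fintype V] (G : SimpleGraph V)
    (t : ℕ) (ht : 1 ≤ t)
    (hacyclic : G.IsAcyclic) (hdeg : ∀ v : V, (G.neighborSet v).ncard ≤ 2)
    (hcomp : Nat.card G.ConnectedComponent = t) :
    burningNumber G ≤ ⌈Real.sqrt (Fintype.card V)⌉₊ + t - 1 := by
  classical
  haveI : Fintype G.ConnectedComponent := Fintype.ofFinite _
  have htcard : Fintype.card G.ConnectedComponent = t := by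
    rw [← Nat.card_eq_fintype_card]; exact hcomp
  obtain ⟨K0⟩ : Nonempty G.ConnectedComponent := Fintype.card_pos_iff.1 (by omega)
  obtain ⟨v0, -⟩ := K0.exists_rep
  choose pa pb pw hpath hsupp using
    fun K => exists_spanning_path (G := G) hacyclic hdeg K
  set cl : List G.ConnectedComponent := Finset.univ.toList with hcl
  have hclnd : cl.Nodup := Finset.nodup_toList _
  have hcll : cl.length = t := by rw [hcl, Finset.length_toList]; simpa using htcard
  set Ls : List (List V) := cl.map (fun K => (pw K).support) with hLs
  have hLsl : Ls.length = t := by simp [hLs, hcll]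
  set L' : List ℕ := Ls.map List.length with hL'
  have hL'l : L'.length = t := by simp [hL', hLsl]
  set R : List ℕ := L'.reverse with hR
  set flat : List V := Ls.flatten with hflat
  set F : ℕ → V := fun p => flat.getD p v0 with hF
  set pos : V → ℕ := fun v => flat.idxOf v with hpos
  -- membership of all vertices
  have hall : ∀ v : V, v ∈ flat := by
    intro v
    rw [hflat, List.mem_flatten]
    refine ⟨(pw (G.connectedComponentMk v)).support, ?_, (hsupp _ v).2 rfl⟩
    rw [hLs]
    exact List.mem_map.2 ⟨_, Finset.mem_toList.2 (Finset.mem_univ _), rfl⟩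
  have hflatnd : flat.Nodup := by
    rw [hflat, List.nodup_flatten]
    constructor
    · intro l hl
      obtain ⟨K, -, rfl⟩ := List.mem_map.1 (by rw [hLs] at hl; exact hl)
      exact (hpath K).support_nodup
    · rw [hLs, List.pairwise_map]
      refine hclnd.imp ?_
      intro K K' hne a ha hb
      exact hne (((hsupp K a).1 ha).symm.trans ((hsupp K' a).1 hb))
  have hflen : flat.length = Fintype.card V := by
    have h1 : flat.length ≤ Fintype.card V := hflatnd.length_le_card
    have h2 : (Finset.univ : Finset V) ⊆ flat.toFinset := fun v _ => List.mem_toFinset.2 (hall v)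
    have h3 := Finset.card_le_card h2
    rw [List.toFinset_card_of_nodup hflatnd, Finset.card_univ] at h3
    omega
  have hRsum : R.sum = flat.length := by
    rw [hR, List.sum_reverse, hL', hflat, List.length_flatten]
  -- block lengths positive
  have hR1 : ∀ ℓ ∈ R, 1 ≤ ℓ := by
    intro ℓ hℓ
    rw [hR, List.mem_reverse, hL'] at hℓ
    obtain ⟨l, hl, rfl⟩ := List.mem_map.1 hℓ
    obtain ⟨K, -, rfl⟩ := List.mem_map.1 (by rw [hLs] at hl; exact hl)
    exact List.length_pos_iff.2 (List.ne_nil_of_mem (pw K).start_mem_support)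
  -- flat index lemma
  have hflatidx : ∀ (j : ℕ) (hj : j < Ls.length) (i : ℕ) (hi : i < (Ls[j]'hj).length),
      F ((L'.take j).sum + i) = (Ls[j]'hj).getD i v0 := by
    intro j hj i hi
    rw [hF, hL', hflat]
    exact flatten_getD v0 Ls j hj i hi
  -- offsets in range
  have hofflt : ∀ (j : ℕ) (hj : j < Ls.length) (i : ℕ), i < (Ls[j]'hj).length →
      (L'.take j).sum + i < flat.length := by
    intro j hj i hi
    have h1 : L'.sum = (L'.take j).sum + (L'.drop j).sum := by
      rw [← List.sum_append, List.take_append_drop]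
    have hjL' : j < L'.length := by rw [hL'l, ← hLsl]; exact hj
    have h2 : L'.drop j = L'[j]'hjL' :: L'.drop (j+1) := List.drop_eq_getElem_cons hjL'
    have h3 : L'[j]'hjL' = (Ls[j]'hj).length := by
      simp only [hL', List.getElem_map]
    have h4 : flat.length = L'.sum := by rw [hflat, List.length_flatten, hL']
    rw [h4, h1, h2, h3]
    simp only [List.sum_cons]
    omega
  have hposlt : ∀ v, pos v < flat.length := fun v =>
    List.idxOf_lt_length_iff.2 (hall v)
  have hFpos : ∀ v, F (pos v) = v := by
    intro v
    rw [hF, hpos]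
    simp only
    rw [List.getD_eq_getElem _ _ (hposlt v)]
    exact List.getElem_idxOf _
  have hposF : ∀ p, p < R.sum → pos (F p) = p := by
    intro p hp
    rw [hRsum] at hp
    rw [hF, hpos]
    simp only
    rw [List.getD_eq_getElem _ _ hp]
    exact List.Nodup.idxOf_getElem hflatnd p hp
  have hposblock : ∀ (j : ℕ) (hj : j < Ls.length) (i : ℕ) (hi : i < (Ls[j]'hj).length),
      pos ((Ls[j]'hj).getD i v0) = (L'.take j).sum + i := by
    intro j hj i hi
    rw [← hflatidx j hj i hi]
    exact hposF _ (by rw [hRsum]; exact hofflt j hj i hi)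
  -- component index facts
  have hKdata : ∀ K : G.ConnectedComponent, ∃ (j : ℕ) (hj : j < Ls.length),
      Ls[j]'hj = (pw K).support := by
    intro K
    have hKmem : K ∈ cl := by rw [hcl]; exact Finset.mem_toList.2 (Finset.mem_univ _)
    have hjlt : cl.idxOf K < cl.length := List.idxOf_lt_length_iff.2 hKmem
    refine ⟨cl.idxOf K, by rw [hLsl, ← hcll]; exact hjlt, ?_⟩
    simp only [hLs, List.getElem_map]
    rw [List.getElem_idxOf hjlt]
  -- hadjpos
  have hadjpos : ∀ u v, G.Adj u v → pos u + 1 = pos v ∨ pos v + 1 = pos u := by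
    intro u v huv
    have hKv : G.connectedComponentMk u = G.connectedComponentMk v :=
      SimpleGraph.ConnectedComponent.connectedComponentMk_eq_of_adj huv
    obtain ⟨j, hj, hLsj⟩ := hKdata (G.connectedComponentMk u)
    have hu : u ∈ (pw (G.connectedComponentMk u)).support := (hsupp _ u).2 rfl
    have hv : v ∈ (pw (G.connectedComponentMk u)).support := (hsupp _ v).2 hKv.symm
    obtain ⟨i, hil, hcase⟩ := adj_consecutive hacyclic huv _ (hpath _) hu hv
    have hsuplen : (pw (G.connectedComponentMk u)).support.length
        = (pw (G.connectedComponentMk u)).length + 1 := SimpleGraph.Walk.length_support _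
    have hposm : ∀ m, m < (pw (G.connectedComponentMk u)).support.length →
        pos ((pw (G.connectedComponentMk u)).getVert m) = (L'.take j).sum + m := by
      intro m hm
      have h1 := hposblock j hj m (by rw [hLsj]; exact hm)
      rw [hLsj] at h1
      rw [List.getD_eq_getElem _ _ hm, support_getElem_eq_getVert _ m hm] at h1
      exact h1
    rcases hcase with ⟨hgu, hgv'⟩ | ⟨hgu, hgv'⟩
    · left
      have e1 : pos u = (L'.take j).sum + i := by
        rw [← hgu]; exact hposm i (by omega)
      have e2 : pos v = (L'.take j).sum + (i+1) := by
        rw [← hgv']; exact hposm (i+1) (by omega)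
      omega
    · right
      have e1 : pos v = (L'.take j).sum + i := by
        rw [← hgu]; exact hposm i (by omega)
      have e2 : pos u = (L'.take j).sum + (i+1) := by
        rw [← hgv']; exact hposm (i+1) (by omega)
      omega
  -- hconsec
  have hconsec : ∀ R₁ ℓ R₂, R = R₁ ++ ℓ :: R₂ → ∀ q, R₂.sum ≤ q → q + 1 < R₂.sum + ℓ →
      G.Adj (F q) (F (q+1)) := by
    intro R₁ ℓ R₂ hdec q hq1 hq2
    have hL'eq : L' = R₂.reverse ++ ℓ :: R₁.reverse := by
      have h0 : R.reverse = L' := by rw [hR, List.reverse_reverse]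
      rw [← h0, hdec]
      simp [List.reverse_append, List.reverse_cons, List.append_assoc]
    have hjlt : R₂.length < L'.length := by
      rw [hL'eq]; simp
    have htakej : (L'.take R₂.length).sum = R₂.sum := by
      rw [hL'eq, show R₂.length = R₂.reverse.length from List.length_reverse.symm,
        List.take_left, List.sum_reverse]
    have hL'j : L'[R₂.length]'hjlt = ℓ := by
      simp only [hL'eq]
      rw [List.getElem_append_right (by simp)]
      simp
    have hjL : R₂.length < Ls.length := by rw [hLsl, ← hL'l]; exact hjlt
    have hlenj : (Ls[R₂.length]'hjL).length = ℓ := by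
      have h1 : L'[R₂.length]'hjlt = (Ls[R₂.length]'hjL).length := by
        simp only [hL', List.getElem_map]
      omega
    have hchainb : (Ls[R₂.length]'hjL).Chain' G.Adj := by
      have hc1 : Ls[R₂.length]'hjL
          = (pw (cl[R₂.length]'(by rw [hcll, ← hLsl]; exact hjL))).support := by
        simp only [hLs, List.getElem_map]
      rw [hc1]
      exact SimpleGraph.Walk.isChain_adj_support _
    have hadj := chain'_getD v0 hchainb (q - R₂.sum) (by omega)
    have e1 : q = (L'.take R₂.length).sum + (q - R₂.sum) := by omega
    have e2 : q + 1 = (L'.take R₂.length).sum + (q - R₂.sum + 1) := by omega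
    have g1 := hflatidx R₂.length hjL (q - R₂.sum) (by omega)
    have g2 := hflatidx R₂.length hjL (q - R₂.sum + 1) (by omega)
    rw [← e1] at g1
    rw [← e2] at g2
    rw [g1, g2]
    exact hadj
  -- hblocks
  have hblocks : ∀ v : V, ∃ R₁ ℓ R₂, R = R₁ ++ ℓ :: R₂ ∧ R₂.sum ≤ pos v ∧
      pos v < R₂.sum + ℓ := by
    intro v
    obtain ⟨j, hj, hLsj⟩ := hKdata (G.connectedComponentMk v)
    have hv : v ∈ Ls[j]'hj := by rw [hLsj]; exact (hsupp _ v).2 rfl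
    have hilt : (Ls[j]'hj).idxOf v < (Ls[j]'hj).length := List.idxOf_lt_length_iff.2 hv
    have hposv : pos v = (L'.take j).sum + (Ls[j]'hj).idxOf v := by
      have h1 := hposblock j hj _ hilt
      rw [List.getD_eq_getElem _ _ hilt, List.getElem_idxOf hilt] at h1
      exact h1
    have hjL' : j < L'.length := by rw [hL'l, ← hLsl]; exact hj
    refine ⟨(L'.drop (j+1)).reverse, L'[j]'hjL', (L'.take j).reverse, ?_, ?_, ?_⟩
    · rw [hR]
      exact reverse_decomp L' j hjL'
    · rw [List.sum_reverse, hposv]; omega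
    · rw [List.sum_reverse, hposv]
      have h3 : L'[j]'hjL' = (Ls[j]'hj).length := by
        simp only [hL', List.getElem_map]
      omega
  -- apply the abstract theorem
  obtain ⟨x, hx⟩ := exists_burning_of_positions R F pos hR1 hFpos hposF hadjpos hconsec hblocks
  have hle : burningNumber G ≤ (coverBlocks R 0).length :=
    Nat.sInf_le ⟨x, hx⟩
  obtain ⟨dd, hlen, hquad⟩ := coverBlocks_len R hR1 0
  have hRlen : R.length = t := by rw [hR, List.length_reverse, hL'l]
  have hRsum' : R.sum = Fintype.card V := by rw [hRsum, hflen]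
  rw [hRlen] at hlen
  rw [hRlen, hRsum'] at hquad
  have hquad' : dd^2 + t ≤ Fintype.card V := by
    have he : (0 + dd)^2 = dd^2 := by ring
    rw [he] at hquad
    omega
  have hd : dd < ⌈Real.sqrt (Fintype.card V)⌉₊ := by
    by_contra hge
    push_neg at hge
    have h1 : Real.sqrt (Fintype.card V) ≤ (dd : ℝ) := by
      refine le_trans (Nat.le_ceil _) ?_
      exact_mod_cast hge
    have h2 : ((Fintype.card V : ℝ)) ≤ (dd : ℝ)^2 := by
      nlinarith [Real.sq_sqrt (by positivity : (0:ℝ) ≤ ((Fintype.card V : ℕ) : ℝ)),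
        Real.sqrt_nonneg ((Fintype.card V : ℕ) : ℝ)]
    have h4 : Fintype.card V ≤ dd^2 := by exact_mod_cast h2
    omega
  omega

/-- A path-forest (acyclic graph of maximum degree at most two) of order `n`
with `t ≥ 1` components has burning number at most `⌈√n⌉ + t - 1`. -/
theorem burningNumber_pathForest_le {V : Type*} [Fintype V] (G : SimpleGraph V)
    (t : ℕ) (ht : 1 ≤ t)
    (hacyclic : G.IsAcyclic) (hdeg : ∀ v : V, (G.neighborSet v).ncard ≤ 2)
    (hcomp : Nat.card G.ConnectedComponent = t) :
    burningNumber G ≤ ⌈Real.sqrt (Fintype.card V)⌉₊ + t - 1 := burningNumber_le_main G t ht hacyclic hdeg hcomp
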